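/- Let ReLU(t) = max(t, 0) and step(t) = 1 if t > 0 and 0 if t < 0. Let Â be a real n×n matrix, E a real n×h matrix, W' a real h×h' matrix, W'' a real h'×h'' matrix, and G a real n×h'' matrix. Set E' = ReLU•(Â E W'), S' = step•(Â E W'), S'' = step•(Â E' W''), and define R(Ẽ, W̃) = ∑_{i,j} G[i,j] · (ReLU•(Â (ReLU•(Â Ẽ W')) W̃))[i,j]. Assume every entry of Â E W' and every entry of Â E' W'' is nonzero. Then the mixed second partial derivative ∂²R/∂E[a,b] ∂W''[c,d] at (E, W'') equals [Â^T (M_{cd} ⊙ S') (W')^T][a,b], where M_{cd} is the n×h' matrix with entries M_{cd}[x,y] = δ_{y,c} · [Â^T (G ⊙ S'')][x,d]. -/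

import Mathlib

open Matrix

/-- The rectified linear unit `ReLU(t) = max(t, 0)`. -/
noncomputable def relu (t : ℝ) : ℝ := max t 0

/-- The step function: `1` for `t > 0`, and `0` otherwise (in particular `0` for `t < 0`). -/
noncomputable def step (t : ℝ) : ℝ := if 0 < t then 1 else 0

open Filter in

lemma relu_hasDerivAt (x q : ℝ) (hx : x ≠ 0) :
    HasDerivAt (fun t : ℝ => relu (x + t * q)) (step x * q) 0 := by
  rcases hx.lt_or_gt with hneg | hpos
  · have hev : (fun t : ℝ => relu (x + t * q)) =ᶠ[nhds 0] fun _ => 0 := by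
      have hc : Continuous fun t : ℝ => x + t * q := by continuity
      have : ∀ᶠ t in nhds (0:ℝ), x + t * q < 0 :=
        (hc.tendsto 0).eventually (eventually_lt_nhds (by simpa using hneg))
      filter_upwards [this] with t ht
      simp [relu, max_eq_right ht.le]
    have : HasDerivAt (fun _ : ℝ => (0:ℝ)) 0 0 := hasDerivAt_const _ _
    have := this.congr_of_eventuallyEq hev
    simpa [step, not_lt.mpr hneg.le, step] using this
  · have hev : (fun t : ℝ => relu (x + t * q)) =ᶠ[nhds 0] fun t => x + t * q := by
      have hc : Continuous fun t : ℝ => x + t * q := by continuity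
      have : ∀ᶠ t in nhds (0:ℝ), 0 < x + t * q :=
        (hc.tendsto 0).eventually (eventually_gt_nhds (by simpa using hpos))
      filter_upwards [this] with t ht
      simp [relu, max_eq_left ht.le]
    have : HasDerivAt (fun t : ℝ => x + t * q) q 0 :=
      by simpa using ((hasDerivAt_id (0:ℝ)).mul_const q).const_add x
    have := this.congr_of_eventuallyEq hev
    simpa [step, hpos] using this

lemma inner_deriv {n h'' : ℕ} (G A B : Matrix (Fin n) (Fin h'') ℝ)
    (hA : ∀ i j, A i j ≠ 0) :
    deriv (fun t : ℝ => ∑ i, ∑ j, G i j * relu (A i j + t * B i j)) 0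
      = ∑ i, ∑ j, G i j * (step (A i j) * B i j) := by
  have : HasDerivAt (fun t : ℝ => ∑ i, ∑ j, G i j * relu (A i j + t * B i j))
      (∑ i, ∑ j, G i j * (step (A i j) * B i j)) 0 := by
    apply HasDerivAt.fun_sum
    intro i _
    apply HasDerivAt.fun_sum
    intro j _
    exact (relu_hasDerivAt _ _ (hA i j)).const_mul _
  exact this.deriv

lemma relu_continuous : Continuous relu := continuous_id.max continuous_const

/-- **Case 5 of Theorem 1, Eq. 18 with the inner formula of Case 4.**
For the two-layer ReLU GCN readout
`R(Ẽ, W̃) = ∑_{i,j} G[i,j] • (ReLU•(Â (ReLU•(Â Ẽ W')) W̃))[i,j]` with no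
preactivation entry at the ReLU kink, the mixed second partial derivative
`∂²R / ∂E[a,b] ∂W''[c,d]` at `(E, W'')` equals `[Âᵀ (M_{cd} ⊙ S') (W')ᵀ][a,b]`,
where `M_{cd}[x,y] = δ_{y,c} • [Âᵀ (G ⊙ S'')][x,d]`, `S' = step•(Â E W')`,
`S'' = step•(Â E' W'')`, `E' = ReLU•(Â E W')`. -/
theorem gcn_mixed_hessian_embedding_two_layers_up
    (n h h' h'' : ℕ)
    (Ahat : Matrix (Fin n) (Fin n) ℝ) (E : Matrix (Fin n) (Fin h) ℝ)
    (W' : Matrix (Fin h) (Fin h') ℝ) (W'' : Matrix (Fin h') (Fin h'') ℝ)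
    (G : Matrix (Fin n) (Fin h'') ℝ)
    (h'ne : ∀ i j, (Ahat * E * W') i j ≠ 0)
    (h''ne : ∀ i j, (Ahat * ((Ahat * E * W').map relu) * W'') i j ≠ 0)
    (a : Fin n) (b : Fin h) (c : Fin h') (d : Fin h'') :
    deriv (fun s : ℝ =>
        deriv (fun t : ℝ =>
            ∑ i, ∑ j, G i j *
              ((Ahat *
                  ((Ahat * (E + s • Matrix.single a b (1 : ℝ)) * W').map relu) *
                  (W'' + t • Matrix.single c d (1 : ℝ))).map relu) i j) 0) 0
      = (Ahatᵀ *
          Matrix.hadamard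
            (Matrix.of (fun x y =>
              (if y = c then (1 : ℝ) else 0) *
                (Ahatᵀ *
                  Matrix.hadamard G
                    ((Ahat * ((Ahat * E * W').map relu) * W'').map step)) x d))
            ((Ahat * E * W').map step) *
          W'ᵀ) a b := by
  set B := Matrix.single a b (1:ℝ) with hB
  set C := Matrix.single c d (1:ℝ) with hC
  set P0 := Ahat * E * W' with hP0
  set Q := Ahat * B * W' with hQ
  have hPs : ∀ s : ℝ, Ahat * (E + s • B) * W' = P0 + s • Q := by
    intro s
    rw [Matrix.mul_add, Matrix.add_mul, Matrix.mul_smul, Matrix.smul_mul]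
  set Es : ℝ → Matrix (Fin n) (Fin h') ℝ := fun s => (P0 + s • Q).map relu with hEs
  set A : ℝ → Matrix (Fin n) (Fin h'') ℝ := fun s => Ahat * Es s * W'' with hAfn
  set Bm : ℝ → Matrix (Fin n) (Fin h'') ℝ := fun s => Ahat * Es s * C with hBm
  have hA0 : A 0 = Ahat * (P0.map relu) * W'' := by simp [hAfn, hEs]
  -- rewrite the inner function
  have hsplit : ∀ (s t : ℝ),
      (∑ i, ∑ j, G i j * ((Ahat * ((Ahat * (E + s • B) * W').map relu) *
        (W'' + t • C)).map relu) i j)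
      = ∑ i, ∑ j, G i j * relu (A s i j + t * Bm s i j) := by
    intro s t
    have : Ahat * ((Ahat * (E + s • B) * W').map relu) * (W'' + t • C)
        = A s + t • Bm s := by
      rw [hPs, Matrix.mul_add, Matrix.mul_smul]
    rw [this]
    simp [Matrix.map_apply, Matrix.add_apply, Matrix.smul_apply, smul_eq_mul]
  -- inner derivative formula, valid when all entries of A s are nonzero
  have hinner : ∀ s : ℝ, (∀ i j, A s i j ≠ 0) →
      deriv (fun t : ℝ =>
            ∑ i, ∑ j, G i j *
              ((Ahat * ((Ahat * (E + s • B) * W').map relu) *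
                  (W'' + t • C)).map relu) i j) 0
        = ∑ i, ∑ j, G i j * (step (A s i j) * Bm s i j) := by
    intro s hs
    have : (fun t : ℝ =>
        ∑ i, ∑ j, G i j * ((Ahat * ((Ahat * (E + s • B) * W').map relu) *
          (W'' + t • C)).map relu) i j)
        = fun t : ℝ => ∑ i, ∑ j, G i j * relu (A s i j + t * Bm s i j) := by
      funext t; exact hsplit s t
    rw [this, inner_deriv G (A s) (Bm s) hs]
  -- continuity of s ↦ A s i j
  have hAcont : ∀ i j, Continuous fun s : ℝ => A s i j := by
    intro i j
    have h1 : Continuous fun s : ℝ => P0 + s • Q :=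
      continuous_const.add (continuous_id.smul continuous_const)
    have h2 : Continuous fun s : ℝ => A s :=
      ((continuous_const.matrix_mul (h1.matrix_map relu_continuous)).matrix_mul
        continuous_const)
    exact h2.matrix_elem i j
  -- eventual sign stability
  have hev : ∀ᶠ s in nhds (0:ℝ), ∀ i j, (A s i j ≠ 0) ∧ step (A s i j) = step (A 0 i j) := by
    rw [Filter.eventually_all]
    intro i
    rw [Filter.eventually_all]
    intro j
    have h0 : A 0 i j ≠ 0 := by rw [hA0]; exact h''ne i j
    rcases h0.lt_or_gt with hneg | hpos
    · have : ∀ᶠ s in nhds (0:ℝ), A s i j < 0 :=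
        ((hAcont i j).tendsto 0).eventually (eventually_lt_nhds hneg)
      filter_upwards [this] with s hs
      exact ⟨hs.ne, by simp [step, not_lt.mpr hs.le, not_lt.mpr hneg.le]⟩
    · have : ∀ᶠ s in nhds (0:ℝ), 0 < A s i j :=
        ((hAcont i j).tendsto 0).eventually (eventually_gt_nhds hpos)
      filter_upwards [this] with s hs
      exact ⟨hs.ne', by simp [step, hs, hpos]⟩
  -- the outer function is eventually equal to g
  set g : ℝ → ℝ := fun s => ∑ i, ∑ j, G i j * (step (A 0 i j) * Bm s i j) with hg
  have heq : (fun s : ℝ =>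
      deriv (fun t : ℝ =>
          ∑ i, ∑ j, G i j *
            ((Ahat * ((Ahat * (E + s • B) * W').map relu) *
                (W'' + t • C)).map relu) i j) 0) =ᶠ[nhds 0] g := by
    filter_upwards [hev] with s hs
    rw [hinner s (fun i j => (hs i j).1)]
    exact Finset.sum_congr rfl fun i _ => Finset.sum_congr rfl fun j _ => by
      rw [(hs i j).2]
  rw [heq.deriv_eq]
  -- compute deriv g 0
  have hgex : g = fun s => ∑ i, ∑ j, G i j * (step (A 0 i j) *
      ∑ k, (∑ l, Ahat i l * relu (P0 l k + s * Q l k)) * C k j) := by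
    funext s
    refine Finset.sum_congr rfl fun i _ => Finset.sum_congr rfl fun j _ => ?_
    simp [hBm, hEs, Matrix.mul_apply, Matrix.map_apply, Matrix.add_apply,
      Matrix.smul_apply, smul_eq_mul]
  have hD : HasDerivAt g (∑ i, ∑ j, G i j * (step (A 0 i j) *
      ∑ k, (∑ l, Ahat i l * (step (P0 l k) * Q l k)) * C k j)) 0 := by
    rw [hgex]
    apply HasDerivAt.fun_sum; intro i _
    apply HasDerivAt.fun_sum; intro j _
    apply HasDerivAt.const_mul
    apply HasDerivAt.const_mul
    apply HasDerivAt.fun_sum; intro k _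
    apply HasDerivAt.mul_const
    apply HasDerivAt.fun_sum; intro l _
    exact (relu_hasDerivAt _ _ (h'ne l k)).const_mul _
  rw [hD.deriv]
  -- final algebra
  rw [hA0]
  simp only [hB, hC, hQ, Matrix.mul_apply, Matrix.hadamard_apply, Matrix.of_apply,
    Matrix.transpose_apply, Matrix.map_apply, Matrix.single, Matrix.of_apply,
    mul_ite, ite_mul, one_mul, mul_one, zero_mul, mul_zero, Finset.sum_ite_eq,
    Finset.sum_ite_eq', Finset.mul_sum, Finset.sum_mul]
  simp only [ite_and, Finset.sum_ite_eq, Finset.sum_ite_eq', Finset.mem_univ, if_true, Finset.sum_ite_irrel, Finset.sum_const_zero]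
  rw [Finset.sum_comm]
  exact Finset.sum_congr rfl fun _ _ => Finset.sum_congr rfl fun _ _ => by ring
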